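/- Let d_0, ..., d_{ℓ-1} ∈ {−1, 0, +1} with partial sums S_0 = 0, S_{i+1} = S_i + d_i, and suppose S_ℓ = R where R > C for some positive integer C, and all S_i ≥ 0. Let c : {0,...,ℓ} → Fin C be any labeling. Then there exist indices i < j with c(i) = c(j), S_i < S_j, and S_t > S_i for all i < t ≤ j — i.e., between the last visit to level S_i and the subsequent strictly higher last-visit level S_j with the same label, the path never returns to level S_i. -/
import Mathlib


theorem stmt_15 (l R C : ℕ) (hC : 1 ≤ C) (hRC : C < R)
    (d : ℕ → ℤ) (hd : ∀ i < l, d i = -1 ∨ d i = 0 ∨ d i = 1)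
    (S : ℕ → ℤ) (hS0 : S 0 = 0) (hSstep : ∀ i < l, S (i + 1) = S i + d i)
    (hSnn : ∀ i ≤ l, 0 ≤ S i) (hSl : S l = (R : ℤ))
    (c : ℕ → Fin C) :
    ∃ i j : ℕ, i < j ∧ j ≤ l ∧ c i = c j ∧ S i < S j ∧
      ∀ t : ℕ, i < t → t ≤ j → S i < S t := by
  classical
  -- discrete intermediate value theorem
  have ivt : ∀ a b : ℕ, a ≤ b → b ≤ l → ∀ v : ℤ, S a ≤ v → v ≤ S b →
      ∃ t, a ≤ t ∧ t ≤ b ∧ S t = v := by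
    intro a b hab hbl v hav hvb
    set P : ℕ → Prop := fun t => a ≤ t ∧ S t ≤ v with hP
    have hPa : P a := ⟨le_refl a, hav⟩
    set t0 := Nat.findGreatest P b with ht0
    have ht0b : t0 ≤ b := Nat.findGreatest_le b
    have hPt0 : P t0 := Nat.findGreatest_spec hab hPa
    rcases eq_or_lt_of_le ht0b with he | hlt
    · refine ⟨t0, hPt0.1, ht0b, le_antisymm hPt0.2 ?_⟩
      rw [he]; exact hvb
    · have hnp : ¬ P (t0 + 1) := Nat.findGreatest_is_greatest (Nat.lt_succ_self t0) hlt
      have hat1 : a ≤ t0 + 1 := le_trans hPt0.1 (Nat.le_succ t0)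
      have hgt : v < S (t0 + 1) := by
        by_contra h
        exact hnp ⟨hat1, le_of_not_gt h⟩
      have ht0l : t0 < l := lt_of_lt_of_le hlt hbl
      have hstep := hSstep t0 ht0l
      have hd' := hd t0 ht0l
      have hle : S t0 ≤ v := hPt0.2
      have : S t0 = v := by rcases hd' with h|h|h <;> omega
      exact ⟨t0, hPt0.1, le_of_lt hlt, this⟩
  set f : ℕ → ℕ := fun v => Nat.findGreatest (fun t => S t = (v : ℤ)) l with hf
  have hfspec : ∀ v : ℕ, v < R → S (f v) = (v : ℤ) ∧ f v ≤ l := by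
    intro v hv
    obtain ⟨t, _, htl, hSt⟩ := ivt 0 l (Nat.zero_le l) le_rfl (v : ℤ)
      (by rw [hS0]; positivity) (by rw [hSl]; exact_mod_cast le_of_lt hv)
    exact ⟨Nat.findGreatest_spec (P := fun t => S t = (v : ℤ)) htl hSt,
      Nat.findGreatest_le l⟩
  have hafter : ∀ v : ℕ, v < R → ∀ t, f v < t → t ≤ l → (v : ℤ) < S t := by
    intro v hv t hft htl
    by_contra h
    push_neg at h
    obtain ⟨t', htt', ht'l, hSt'⟩ := ivt t l htl le_rfl (v : ℤ) h
      (by rw [hSl]; exact_mod_cast le_of_lt hv)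
    exact Nat.findGreatest_is_greatest (P := fun t => S t = (v : ℤ)) (lt_of_lt_of_le hft htt') ht'l hSt'
  have hmono : ∀ v w : ℕ, v < w → w < R → f v < f w := by
    intro v w hvw hw
    have hv : v < R := lt_trans hvw hw
    by_contra h
    push_neg at h
    have hne : f w ≠ f v := by
      intro he
      have h1 := (hfspec v hv).1
      have h2 := (hfspec w hw).1
      rw [he, h1] at h2
      have : v = w := by exact_mod_cast h2
      omega
    have hlt : f w < f v := lt_of_le_of_ne h hne
    have h3 := hafter w hw (f v) hlt (hfspec v hv).2
    rw [(hfspec v hv).1] at h3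
    have : (v : ℤ) < (w : ℤ) := by exact_mod_cast hvw
    omega
  have hninj : ¬ Function.Injective (fun v : Fin (C + 1) => c (f v.val)) := by
    intro hinj
    have := Fintype.card_le_of_injective _ hinj
    simp at this
  obtain ⟨v, w, heq, hne⟩ := Function.not_injective_iff.mp hninj
  have key : ∀ v w : Fin (C + 1), v < w → c (f v.val) = c (f w.val) →
      ∃ i j : ℕ, i < j ∧ j ≤ l ∧ c i = c j ∧ S i < S j ∧
      ∀ t : ℕ, i < t → t ≤ j → S i < S t := by
    intro v w hvw heq
    have hwR : w.val < R := lt_of_le_of_lt (Nat.lt_succ_iff.mp w.isLt) hRC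
    have hvR : v.val < R := lt_trans hvw hwR
    refine ⟨f v.val, f w.val, hmono _ _ hvw hwR, (hfspec _ hwR).2, heq, ?_, ?_⟩
    · rw [(hfspec _ hvR).1, (hfspec _ hwR).1]
      exact_mod_cast hvw
    · intro t hit htj
      rw [(hfspec _ hvR).1]
      exact hafter _ hvR t hit (le_trans htj (hfspec _ hwR).2)
  rcases lt_or_gt_of_ne hne with h | h
  · exact key v w h heq
  · exact key w v h heq.symm
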